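/- arXiv:1306.0101 — 5 statements merged into one kernel-verified Lean document; each statement's English description precedes it below -/
import Mathlib

section
/- Let λ, μ, ρ, ν be real numbers with μ − λ = ν − ρ = δ and δ ∉ {1/2, 1, 3/2, 2, 5/2}. Suppose there exist nonzero real numbers τ₀, τ₁, τ₂, τ₃, τ₄, τ₅ satisfying the six intertwining equations τ₀·β₀³(λ,μ) = τ₃·β₀³(ρ,ν), τ₀·β₀⁴(λ,μ) = τ₄·β₀⁴(ρ,ν), τ₀·β₀⁵(λ,μ) = τ₅·β₀⁵(ρ,ν), τ₁·β₁⁴(λ,μ) = τ₄·β₁⁴(ρ,ν), τ₁·β₁⁵(λ,μ) = τ₅·β₁⁵(ρ,ν), τ₂·β₂⁵(λ,μ) = τ₅·β₂⁵(ρ,ν). Then λ = ρ or ρ + μ = 1/2. (This is the algebraic content of Theorem 3.1(ii): for k ≥ 5/2 and nonresonant δ, the K(1)-module of differential operators of order k from λ-densities to μ-densities on the supercircle S^{1|1} is isomorphic only to itself and to its adjoint module.) -/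
/-- β₀³(λ,μ) = −λ(2δ+2λ−1)/(2δ−2) where δ = μ−λ. -/
noncomputable def b03 (l m : ℝ) : ℝ :=
  -(l * (2 * (m - l) + 2 * l - 1)) / (2 * (m - l) - 2)

/-- β₀⁴(λ,μ) = −3λ(2δ+2λ−1)/((2δ−1)(2δ−4)). -/
noncomputable def b04 (l m : ℝ) : ℝ :=
  -(3 * l * (2 * (m - l) + 2 * l - 1)) / ((2 * (m - l) - 1) * (2 * (m - l) - 4))

/-- β₁⁴(λ,μ) = −(2δ+4λ−1)/(2(2δ−3)). -/
noncomputable def b14 (l m : ℝ) : ℝ :=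
  -(2 * (m - l) + 4 * l - 1) / (2 * (2 * (m - l) - 3))

/-- β₀⁵(λ,μ) = λ(2δ+2λ−1)(2δ+4λ−1)/((2δ−1)(2δ−3)(2δ−5)). -/
noncomputable def b05 (l m : ℝ) : ℝ :=
  (l * (2 * (m - l) + 2 * l - 1) * (2 * (m - l) + 4 * l - 1)) /
    ((2 * (m - l) - 1) * (2 * (m - l) - 3) * (2 * (m - l) - 5))

/-- β₁⁵(λ,μ) = −3(4λδ+2δ+4λ²−2λ−1)/((2δ−5)(4δ−4)). -/
noncomputable def b15 (l m : ℝ) : ℝ :=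
  -(3 * (4 * l * (m - l) + 2 * (m - l) + 4 * l ^ 2 - 2 * l - 1)) /
    ((2 * (m - l) - 5) * (4 * (m - l) - 4))

/-- β₂⁵(λ,μ) = −(δ+4λδ−2λ+4λ²)/(2(δ−2)). -/
noncomputable def b25 (l m : ℝ) : ℝ :=
  -((m - l) + 4 * l * (m - l) - 2 * l + 4 * l ^ 2) / (2 * ((m - l) - 2))

/-- For nonresonant δ and k = 5/2, solvability of the six intertwining
equations forces λ = ρ or ρ + μ = 1/2 (Theorem 3.1 (ii)). -/
theorem stmt0 (lam mu rho nu δ : ℝ)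
    (hδ1 : mu - lam = δ) (hδ2 : nu - rho = δ)
    (h1 : δ ≠ 1 / 2) (h2 : δ ≠ 1) (h3 : δ ≠ 3 / 2) (h4 : δ ≠ 2) (h5 : δ ≠ 5 / 2)
    (τ0 τ1 τ2 τ3 τ4 τ5 : ℝ)
    (hτ0 : τ0 ≠ 0) (hτ1 : τ1 ≠ 0) (hτ2 : τ2 ≠ 0)
    (hτ3 : τ3 ≠ 0) (hτ4 : τ4 ≠ 0) (hτ5 : τ5 ≠ 0)
    (e1 : τ0 * b03 lam mu = τ3 * b03 rho nu)
    (e2 : τ0 * b04 lam mu = τ4 * b04 rho nu)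
    (e3 : τ0 * b05 lam mu = τ5 * b05 rho nu)
    (e4 : τ1 * b14 lam mu = τ4 * b14 rho nu)
    (e5 : τ1 * b15 lam mu = τ5 * b15 rho nu)
    (e6 : τ2 * b25 lam mu = τ5 * b25 rho nu) :
    lam = rho ∨ rho + mu = 1 / 2 := by
  have hd1 : (2 * δ - 1) ≠ 0 := by intro h; apply h1; linarith
  have hd3 : (2 * δ - 3) ≠ 0 := by intro h; apply h3; linarith
  have hd4 : (2 * δ - 4) ≠ 0 := by intro h; apply h4; linarith
  have hd5 : (2 * δ - 5) ≠ 0 := by intro h; apply h5; linarith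
  have hd44 : (4 * δ - 4) ≠ 0 := by intro h; apply h2; linarith
  -- cleaned equations (common δ-denominators cancelled)
  have E2 : τ0 * (lam * (2 * δ + 2 * lam - 1)) = τ4 * (rho * (2 * δ + 2 * rho - 1)) := by
    have hc : (-3 / ((2 * δ - 1) * (2 * δ - 4))) ≠ 0 :=
      div_ne_zero (by norm_num) (mul_ne_zero hd1 hd4)
    apply mul_left_cancel₀ hc
    have h := e2
    unfold b04 at h
    rw [hδ1, hδ2] at h
    field_simp at h ⊢
    linarith
  have E3 : τ0 * (lam * (2 * δ + 2 * lam - 1) * (2 * δ + 4 * lam - 1)) =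
      τ5 * (rho * (2 * δ + 2 * rho - 1) * (2 * δ + 4 * rho - 1)) := by
    have hc : ((1 : ℝ) / ((2 * δ - 1) * (2 * δ - 3) * (2 * δ - 5))) ≠ 0 :=
      div_ne_zero (by norm_num) (mul_ne_zero (mul_ne_zero hd1 hd3) hd5)
    apply mul_left_cancel₀ hc
    have h := e3
    unfold b05 at h
    rw [hδ1, hδ2] at h
    field_simp at h ⊢
    linarith
  have E4 : τ1 * (2 * δ + 4 * lam - 1) = τ4 * (2 * δ + 4 * rho - 1) := by
    have hc : (-1 / (2 * (2 * δ - 3))) ≠ 0 :=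
      div_ne_zero (by norm_num) (mul_ne_zero two_ne_zero hd3)
    apply mul_left_cancel₀ hc
    have h := e4
    unfold b14 at h
    rw [hδ1, hδ2] at h
    field_simp at h ⊢
    linarith
  have E5 : τ1 * (4 * lam * δ + 2 * δ + 4 * lam ^ 2 - 2 * lam - 1) =
      τ5 * (4 * rho * δ + 2 * δ + 4 * rho ^ 2 - 2 * rho - 1) := by
    have hc : (-3 / ((2 * δ - 5) * (4 * δ - 4))) ≠ 0 :=
      div_ne_zero (by norm_num) (mul_ne_zero hd5 hd44)
    apply mul_left_cancel₀ hc
    have h := e5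
    unfold b15 at h
    rw [hδ1, hδ2] at h
    field_simp at h ⊢
    linarith
  -- key polynomial identity
  have key : (τ0 * τ1 * (lam * (2 * δ + 2 * lam - 1)) * (2 * (2 * δ - 1) * (2 * δ - 5))) *
      ((lam - rho) * (2 * lam + 2 * rho + 2 * δ - 1)) = 0 := by
    linear_combination
      (τ1 * (4 * lam * δ + 2 * δ + 4 * lam ^ 2 - 2 * lam - 1) * (2 * δ + 4 * rho - 1) ^ 2) * E2 +
      (τ4 * (rho * (2 * δ + 2 * rho - 1)) * (2 * δ + 4 * rho - 1) ^ 2) * E5 +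
      (-(τ1 * (2 * δ + 4 * lam - 1) * (4 * rho * δ + 2 * δ + 4 * rho ^ 2 - 2 * rho - 1))) * E3 +
      (-(τ5 * (rho * (2 * δ + 2 * rho - 1)) * (2 * δ + 4 * rho - 1) *
          (4 * rho * δ + 2 * δ + 4 * rho ^ 2 - 2 * rho - 1))) * E4
  have hW : (lam - rho) * (2 * lam + 2 * rho + 2 * δ - 1) = 0 := by
    by_cases hA : lam * (2 * δ + 2 * lam - 1) = 0
    · have ha : rho * (2 * δ + 2 * rho - 1) = 0 := by
        have h := E2
        rw [hA, mul_zero] at h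
        exact (mul_eq_zero.mp h.symm).resolve_left hτ4
      linear_combination hA - ha
    · rcases mul_eq_zero.mp key with h | h
      · exact absurd h (mul_ne_zero (mul_ne_zero (mul_ne_zero hτ0 hτ1) hA)
          (mul_ne_zero (mul_ne_zero (by norm_num) hd1) hd5))
      · exact h
  rcases mul_eq_zero.mp hW with h | h
  · left; linarith [sub_eq_zero.mp h]
  · right; linarith
end

section
/- Let λ, μ be real numbers with δ = μ − λ ∉ {1/2, 1, 3/2, 2, 5/2}, and set ρ = 1/2 − μ and ν = 1/2 − λ (the adjoint weights, which satisfy ν − ρ = δ). Then β₀³(ρ,ν) = β₀³(λ,μ), β₀⁴(ρ,ν) = β₀⁴(λ,μ), β₁⁴(ρ,ν) = −β₁⁴(λ,μ), β₀⁵(ρ,ν) = −β₀⁵(λ,μ), β₁⁵(ρ,ν) = β₁⁵(λ,μ), and β₂⁵(ρ,ν) = β₂⁵(λ,μ). Consequently the nonzero numbers τ₀ = 1, τ₁ = −1, τ₂ = −1, τ₃ = 1, τ₄ = 1, τ₅ = −1 satisfy all six intertwining equations τ₀·β₀³(λ,μ) = τ₃·β₀³(ρ,ν), τ₀·β₀⁴(λ,μ)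 = τ₄·β₀⁴(ρ,ν), τ₀·β₀⁵(λ,μ) = τ₅·β₀⁵(ρ,ν), τ₁·β₁⁴(λ,μ) = τ₄·β₁⁴(ρ,ν), τ₁·β₁⁵(λ,μ) = τ₅·β₁⁵(ρ,ν), τ₂·β₂⁵(λ,μ) = τ₅·β₂⁵(ρ,ν). (This expresses that the passage to the adjoint module D^k_{1/2−μ,1/2−λ} always gives an isomorphism of K(1)-modules, consistently with Theorem 3.1.) -/
/-- Passage to the adjoint weights ρ = 1/2 − μ, ν = 1/2 − λ preserves (up to
explicit signs) the coefficients β, so that τ = (1,−1,−1,1,1,−1) solves the six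
intertwining equations: the adjoint module is always isomorphic to the original. -/
theorem stmt1 (lam mu rho nu δ : ℝ)
    (hδ : mu - lam = δ)
    (h1 : δ ≠ 1 / 2) (h2 : δ ≠ 1) (h3 : δ ≠ 3 / 2) (h4 : δ ≠ 2) (h5 : δ ≠ 5 / 2)
    (hρ : rho = 1 / 2 - mu) (hν : nu = 1 / 2 - lam) :
    b03 rho nu = b03 lam mu ∧
    b04 rho nu = b04 lam mu ∧
    b14 rho nu = -b14 lam mu ∧
    b05 rho nu = -b05 lam mu ∧
    b15 rho nu = b15 lam mu ∧
    b25 rho nu = b25 lam mu ∧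
    (1 : ℝ) * b03 lam mu = 1 * b03 rho nu ∧
    (1 : ℝ) * b04 lam mu = 1 * b04 rho nu ∧
    (1 : ℝ) * b05 lam mu = (-1) * b05 rho nu ∧
    (-1 : ℝ) * b14 lam mu = 1 * b14 rho nu ∧
    (-1 : ℝ) * b15 lam mu = (-1) * b15 rho nu ∧
    (-1 : ℝ) * b25 lam mu = (-1) * b25 rho nu := by
  subst hρ hν
  have e1 : 2 * (mu - lam) - 1 ≠ 0 := fun h => h1 (by linarith [hδ])
  have e2 : 2 * (mu - lam) - 2 ≠ 0 := fun h => h2 (by linarith [hδ])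
  have e3 : 2 * (mu - lam) - 3 ≠ 0 := fun h => h3 (by linarith [hδ])
  have e4 : 2 * (mu - lam) - 4 ≠ 0 := fun h => h4 (by linarith [hδ])
  have e5 : 2 * (mu - lam) - 5 ≠ 0 := fun h => h5 (by linarith [hδ])
  have e2' : (mu - lam) - 2 ≠ 0 := fun h => h4 (by linarith [hδ])
  have e4' : 4 * (mu - lam) - 4 ≠ 0 := fun h => h2 (by linarith [hδ])
  have d : (1/2 - lam) - (1/2 - mu) = mu - lam := by ring
  refine ⟨?_, ?_, ?_, ?_, ?_, ?_, ?_, ?_, ?_, ?_, ?_, ?_⟩ <;>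
    simp only [b03, b04, b14, b05, b15, b25, d] <;>
    field_simp <;> ring
end

section
/- Let λ, ρ be real numbers with λ(2λ+3) ≠ 0. Suppose there exist nonzero real numbers τ₀, τ₁, τ₃, τ₄ such that τ₀·λ(2λ+3) = τ₃·ρ(2ρ+3), τ₁·(4λ+3) = τ₄·(4ρ+3), τ₃ = τ₄, and τ₀·λ(2λ+3)·(2λ²+3λ+1)·(ρ² + (3/2)ρ + 1) = τ₄·ρ(2ρ+3)·(2ρ²+3ρ+1)·(λ² + (3/2)λ + 1). Then λ = ρ or λ + ρ = −3/2 (equivalently ρ = 1/2 − μ with μ = λ + 2, so that D²_{ρ,ρ+2} is the adjoint module of D²_{λ,λ+2}). -/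
/-- The resonant case δ = 2, order k = 2 (Theorem 3.1): the denominator-free
intertwining equations in terms of normal symbols force λ = ρ or
λ + ρ = −3/2, i.e. D²_{ρ,ρ+2} is the adjoint module of D²_{λ,λ+2}. -/
theorem stmt3 (lam rho : ℝ) (hlam : lam * (2 * lam + 3) ≠ 0)
    (τ0 τ1 τ3 τ4 : ℝ)
    (hτ0 : τ0 ≠ 0) (hτ1 : τ1 ≠ 0) (hτ3 : τ3 ≠ 0) (hτ4 : τ4 ≠ 0)
    (e1 : τ0 * (lam * (2 * lam + 3)) = τ3 * (rho * (2 * rho + 3)))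
    (e2 : τ1 * (4 * lam + 3) = τ4 * (4 * rho + 3))
    (e3 : τ3 = τ4)
    (e4 : τ0 * (lam * (2 * lam + 3)) * (2 * lam ^ 2 + 3 * lam + 1) *
            (rho ^ 2 + (3 / 2) * rho + 1)
        = τ4 * (rho * (2 * rho + 3)) * (2 * rho ^ 2 + 3 * rho + 1) *
            (lam ^ 2 + (3 / 2) * lam + 1)) :
    lam = rho ∨ lam + rho = -(3 / 2) := by
  subst e3
  have hr : rho * (2 * rho + 3) ≠ 0 := by
    intro h
    rw [h, mul_zero] at e1
    exact mul_ne_zero hτ0 hlam e1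
  have h5 : τ3 * (rho * (2 * rho + 3)) * ((lam - rho) * (lam + rho + 3 / 2)) = 0 := by
    linear_combination e4 - (2 * lam ^ 2 + 3 * lam + 1) * (rho ^ 2 + (3 / 2) * rho + 1) * e1
  have h6 := (mul_eq_zero.mp h5).resolve_left (mul_ne_zero hτ3 hr)
  rcases mul_eq_zero.mp h6 with h | h
  · left; linarith
  · right; linarith
end

section
/- Let λ, μ, ρ, ν be real numbers with μ − λ = ν − ρ = δ and δ ∉ {1/2, 1, 3/2, 2}. Assume λ(2δ+2λ−1) ≠ 0, ρ(2δ+2ρ−1) ≠ 0, 2δ+4λ−1 ≠ 0 and 2δ+4ρ−1 ≠ 0. Then there exist nonzero real numbers τ₀, τ₁, τ₂, τ₃, τ₄ with τ₄ = τ₃ satisfying τ₀·β₀³(λ,μ) = τ₃·β₀³(ρ,ν), τ₀·β₀⁴(λ,μ) = τ₄·β₀⁴(ρ,ν) and τ₁·β₁⁴(λ,μ) = τ₄·β₁⁴(ρ,ν); explicitly one may take τ₃ = τ₄ = 1, τ₂ = 1, τ₀ = β₀⁴(ρ,ν)/β₀⁴(λ,μ) and τ₁ = β₁⁴(ρ,ν)/β₁⁴(λ,μ).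 (This is the generic-isomorphism step for order k = 2 in Theorem 3.1(i); it uses the proportionality β₀⁴(λ,μ) = β₀³(λ,μ)·3(2δ−2)/((2δ−1)(2δ−4)), whose factor depends only on δ.) -/
/-- The generic-isomorphism step for order k = 2 in Theorem 3.1 (i): for
nonresonant generic weights, the intertwining equations with τ₄ = τ₃ admit a
nonzero solution, explicitly τ₃ = τ₄ = τ₂ = 1, τ₀ = β₀⁴(ρ,ν)/β₀⁴(λ,μ),
τ₁ = β₁⁴(ρ,ν)/β₁⁴(λ,μ). -/
theorem stmt4 (lam mu rho nu δ : ℝ)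
    (hδ1 : mu - lam = δ) (hδ2 : nu - rho = δ)
    (h1 : δ ≠ 1 / 2) (h2 : δ ≠ 1) (h3 : δ ≠ 3 / 2) (h4 : δ ≠ 2)
    (hlam : lam * (2 * δ + 2 * lam - 1) ≠ 0)
    (hrho : rho * (2 * δ + 2 * rho - 1) ≠ 0)
    (hlam' : 2 * δ + 4 * lam - 1 ≠ 0)
    (hrho' : 2 * δ + 4 * rho - 1 ≠ 0) :
    ∃ τ0 τ1 τ2 τ3 τ4 : ℝ,
      τ0 ≠ 0 ∧ τ1 ≠ 0 ∧ τ2 ≠ 0 ∧ τ3 ≠ 0 ∧ τ4 ≠ 0 ∧ τ4 = τ3 ∧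
      τ0 * b03 lam mu = τ3 * b03 rho nu ∧
      τ0 * b04 lam mu = τ4 * b04 rho nu ∧
      τ1 * b14 lam mu = τ4 * b14 rho nu ∧
      τ3 = 1 ∧ τ4 = 1 ∧ τ2 = 1 ∧
      τ0 = b04 rho nu / b04 lam mu ∧
      τ1 = b14 rho nu / b14 lam mu := by
  have d1 : 2 * δ - 1 ≠ 0 := by intro h; apply h1; linarith
  have d2 : 2 * δ - 2 ≠ 0 := by intro h; apply h2; linarith
  have d3 : 2 * δ - 3 ≠ 0 := by intro h; apply h3; linarith
  have d4 : 2 * δ - 4 ≠ 0 := by intro h; apply h4; linarith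
  have hb04l : b04 lam mu ≠ 0 := by
    unfold b04; rw [hδ1]
    exact div_ne_zero (by intro h; apply hlam; nlinarith [sq_nonneg lam])
      (mul_ne_zero d1 d4)
  have hb04r : b04 rho nu ≠ 0 := by
    unfold b04; rw [hδ2]
    exact div_ne_zero (by intro h; apply hrho; nlinarith [sq_nonneg rho])
      (mul_ne_zero d1 d4)
  have hb14l : b14 lam mu ≠ 0 := by
    unfold b14; rw [hδ1]
    exact div_ne_zero (by intro h; apply hlam'; linarith)
      (mul_ne_zero two_ne_zero d3)
  have hb14r : b14 rho nu ≠ 0 := by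
    unfold b14; rw [hδ2]
    exact div_ne_zero (by intro h; apply hrho'; linarith)
      (mul_ne_zero two_ne_zero d3)
  refine ⟨b04 rho nu / b04 lam mu, b14 rho nu / b14 lam mu, 1, 1, 1,
    div_ne_zero hb04r hb04l, div_ne_zero hb14r hb14l, one_ne_zero, one_ne_zero,
    one_ne_zero, rfl, ?_, ?_, ?_, rfl, rfl, rfl, rfl, rfl⟩
  · have hb03l : b03 lam mu ≠ 0 := by
      unfold b03; rw [hδ1]
      exact div_ne_zero (by intro h; apply hlam; nlinarith [sq_nonneg lam]) d2
    have hc : (3 * (2 * δ - 2)) / ((2 * δ - 1) * (2 * δ - 4)) ≠ 0 :=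
      div_ne_zero (mul_ne_zero three_ne_zero d2)
        (mul_ne_zero d1 d4)
    have keyl : b04 lam mu = b03 lam mu * ((3 * (2 * δ - 2)) / ((2 * δ - 1) * (2 * δ - 4))) := by
      unfold b03 b04; rw [hδ1]; field_simp
    have keyr : b04 rho nu = b03 rho nu * ((3 * (2 * δ - 2)) / ((2 * δ - 1) * (2 * δ - 4))) := by
      unfold b03 b04; rw [hδ2]; field_simp
    rw [keyl, keyr, mul_div_mul_right _ _ hc, div_mul_cancel₀ _ hb03l, one_mul]
  · rw [div_mul_cancel₀ _ hb04l, one_mul]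
  · rw [div_mul_cancel₀ _ hb14l, one_mul]
end

section
/- Let λ, δ be real numbers such that δ is nonresonant, i.e. 2δ is not a positive integer. Fix natural numbers j ≤ N. Then there exists a unique family of real numbers (ξ_i)_{j ≤ i ≤ N} with ξ_j = 1 satisfying, for every i with j < i ≤ N: ((i−j)/2)·ξ_i = (i/2)·ξ_{i−1} if i and j are both even; ((i−j)/2)·ξ_i = (2λ + ⌊i/2⌋)·ξ_{i−1} if i and j are both odd; (i − 2δ − ⌊(i−j)/2⌋)·ξ_i = (2λ + ⌊i/2⌋)·ξ_{i−1} if i is odd and j is even; and (i − 2δ − ⌊(i−j)/2⌋)·ξ_i = (i/2)·ξ_{i−1} if i is even and j is odd. (This recurrence system expresses the osp(1|2)-equivariance of the symbol map for differential operators on weighted densities over S^{1|1} with δ = μ − λ, and its unique solvability is the key step in the proof that the equivariant symbol map exists and is unique.) -/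
/-- For nonresonant δ (2δ not a positive integer), the linear recurrence system
coming from osp(1|2)-equivariance of the symbol map has a unique solution
(ξ_i)_{j ≤ i ≤ N} with the normalization ξ_j = 1. -/
theorem stmt5 (lam δ : ℝ) (hres : ∀ m : ℕ, 0 < m → 2 * δ ≠ (m : ℝ))
    (j N : ℕ) (hjN : j ≤ N) :
    ∃ ξ : ℕ → ℝ,
      (ξ j = 1 ∧
        ∀ i : ℕ, j < i → i ≤ N →
          ((i % 2 = 0 ∧ j % 2 = 0 →
              (((i : ℝ) - j) / 2) * ξ i = ((i : ℝ) / 2) * ξ (i - 1)) ∧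
           (i % 2 = 1 ∧ j % 2 = 1 →
              (((i : ℝ) - j) / 2) * ξ i = (2 * lam + (i / 2 : ℕ)) * ξ (i - 1)) ∧
           (i % 2 = 1 ∧ j % 2 = 0 →
              ((i : ℝ) - 2 * δ - ((i - j) / 2 : ℕ)) * ξ i
                = (2 * lam + (i / 2 : ℕ)) * ξ (i - 1)) ∧
           (i % 2 = 0 ∧ j % 2 = 1 →
              ((i : ℝ) - 2 * δ - ((i - j) / 2 : ℕ)) * ξ i
                = ((i : ℝ) / 2) * ξ (i - 1)))) ∧
      ∀ ξ' : ℕ → ℝ,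
        (ξ' j = 1 ∧
          ∀ i : ℕ, j < i → i ≤ N →
            ((i % 2 = 0 ∧ j % 2 = 0 →
                (((i : ℝ) - j) / 2) * ξ' i = ((i : ℝ) / 2) * ξ' (i - 1)) ∧
             (i % 2 = 1 ∧ j % 2 = 1 →
                (((i : ℝ) - j) / 2) * ξ' i = (2 * lam + (i / 2 : ℕ)) * ξ' (i - 1)) ∧
             (i % 2 = 1 ∧ j % 2 = 0 →
                ((i : ℝ) - 2 * δ - ((i - j) / 2 : ℕ)) * ξ' i
                  = (2 * lam + (i / 2 : ℕ)) * ξ' (i - 1)) ∧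
             (i % 2 = 0 ∧ j % 2 = 1 →
                ((i : ℝ) - 2 * δ - ((i - j) / 2 : ℕ)) * ξ' i
                  = ((i : ℝ) / 2) * ξ' (i - 1)))) →
        ∀ i : ℕ, j ≤ i → i ≤ N → ξ' i = ξ i := by
  classical
  set c : ℕ → ℝ := fun i => if i % 2 = j % 2 then ((i:ℝ) - j)/2
      else ((i:ℝ) - 2*δ - (((i-j)/2 : ℕ) : ℝ)) with hc
  set r : ℕ → ℝ := fun i => if i % 2 = 0 then (i:ℝ)/2
      else 2*lam + ((i/2 : ℕ) : ℝ) with hr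
  have hcne : ∀ i, j < i → c i ≠ 0 := by
    intro i hi
    by_cases hp : i % 2 = j % 2
    · simp only [hc, if_pos hp]
      have hji : (j:ℝ) < i := by exact_mod_cast hi
      have : (i:ℝ) - j ≠ 0 := sub_ne_zero.mpr (ne_of_gt hji)
      exact div_ne_zero this two_ne_zero
    · simp only [hc, if_neg hp]
      have hlt : (i - j) / 2 < i := by omega
      have hle : (i - j) / 2 ≤ i := le_of_lt hlt
      set m : ℕ := i - (i - j) / 2 with hm
      have hmpos : 0 < m := by omega
      have hcast : ((i:ℝ) - 2*δ - (((i-j)/2 : ℕ) : ℝ)) = (m:ℝ) - 2*δ := by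
        rw [hm, Nat.cast_sub hle]; ring
      rw [hcast]
      exact sub_ne_zero.mpr fun h => hres m hmpos h.symm
  -- the solution
  let ξ : ℕ → ℝ := fun n => Nat.rec (motive := fun _ => ℝ) 1
      (fun k ih => if k + 1 ≤ j then 1 else (r (k+1) / c (k+1)) * ih) n
  have hξ0 : ∀ n, n ≤ j → ξ n = 1 := by
    intro n
    induction n with
    | zero => intro _; rfl
    | succ k ih =>
      intro h
      show (if k + 1 ≤ j then (1:ℝ) else (r (k+1) / c (k+1)) * ξ k) = 1
      rw [if_pos h]
  have hstep : ∀ k, j < k + 1 → ξ (k+1) = (r (k+1) / c (k+1)) * ξ k := by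
    intro k hk
    show (if k + 1 ≤ j then (1:ℝ) else (r (k+1) / c (k+1)) * ξ k) = _
    rw [if_neg (by omega)]
  have hrec : ∀ i, j < i → c i * ξ i = r i * ξ (i-1) := by
    intro i hi
    obtain ⟨k, rfl⟩ : ∃ k, i = k + 1 := ⟨i - 1, by omega⟩
    rw [hstep k hi]
    have h0 := hcne (k+1) hi
    show c (k+1) * (r (k+1) / c (k+1) * ξ k) = r (k+1) * ξ k
    field_simp
  have equiv : ∀ (f : ℕ → ℝ) (i : ℕ),
      ((i % 2 = 0 ∧ j % 2 = 0 →
          (((i : ℝ) - j) / 2) * f i = ((i : ℝ) / 2) * f (i - 1)) ∧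
       (i % 2 = 1 ∧ j % 2 = 1 →
          (((i : ℝ) - j) / 2) * f i = (2 * lam + (i / 2 : ℕ)) * f (i - 1)) ∧
       (i % 2 = 1 ∧ j % 2 = 0 →
          ((i : ℝ) - 2 * δ - ((i - j) / 2 : ℕ)) * f i
            = (2 * lam + (i / 2 : ℕ)) * f (i - 1)) ∧
       (i % 2 = 0 ∧ j % 2 = 1 →
          ((i : ℝ) - 2 * δ - ((i - j) / 2 : ℕ)) * f i
            = ((i : ℝ) / 2) * f (i - 1)))
      ↔ c i * f i = r i * f (i-1) := by
    intro f i
    rcases Nat.mod_two_eq_zero_or_one i with hi | hi <;>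
      rcases Nat.mod_two_eq_zero_or_one j with hj | hj <;>
      simp [hc, hr, hi, hj]
  refine ⟨ξ, ⟨hξ0 j le_rfl, ?_⟩, ?_⟩
  · intro i hij _
    exact (equiv ξ i).mpr (hrec i hij)
  · rintro ξ' ⟨h1, h2⟩ i hji
    induction i, hji using Nat.le_induction with
    | base => intro _; rw [h1, hξ0 j le_rfl]
    | succ k hk ih =>
      intro hN
      have e' := (equiv ξ' (k+1)).mp (h2 (k+1) (by omega) hN)
      have e := hrec (k+1) (by omega)
      have hkk : (k+1) - 1 = k := rfl
      rw [hkk] at e e'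
      have : c (k+1) * ξ' (k+1) = c (k+1) * ξ (k+1) := by
        rw [e', ih (by omega), ← e]
      exact mul_left_cancel₀ (hcne _ (by omega)) this
end
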